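/- Let H and F be complex vector spaces with dim F > 2, and let R : Λ²W → End(H ⊗ F) be a linear map (W a vector space) and ρ : H ⊗ F → W a linear map, such that for all e ∈ H and f₁,f₂,f₃ ∈ F the cyclic sum R(ρ(e⊗f₁),ρ(e⊗f₂))(e⊗f₃) + R(ρ(e⊗f₂),ρ(e⊗f₃))(e⊗f₁) + R(ρ(e⊗f₃),ρ(e⊗f₁))(e⊗f₂) lies in e ⊗ F := {e ⊗ f : f ∈ F}, and such that R(X,Y) = R^H(X,Y) ⊗ id_F + id_H ⊗ R^F(X,Y) for some R^H : Λ²W → End(H), R^F : Λ²W → End(F). Then each term R(ρ(e⊗f₁),ρ(e⊗f₂))(e⊗f₃) lies in e ⊗ F; equivalently R^H(ρ(e⊗f₁),ρ(e⊗f₂))e is proportional to e for all e ∈ H and f₁,f₂ ∈ F. -/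
import Mathlib


open TensorProduct Module

/-- Let `H`, `F` be complex vector spaces with `dim F > 2`, `W` a
complex vector space, `R : Λ²W → End(H ⊗ F)` and `ρ : H ⊗ F → W` linear, such that
for all `e ∈ H`, `f₁,f₂,f₃ ∈ F` the cyclic sum
`R(ρ(e⊗f₁),ρ(e⊗f₂))(e⊗f₃) + R(ρ(e⊗f₂),ρ(e⊗f₃))(e⊗f₁) + R(ρ(e⊗f₃),ρ(e⊗f₁))(e⊗f₂)`
lies in `e ⊗ F`, and `R(X,Y) = R^H(X,Y) ⊗ id_F + id_H ⊗ R^F(X,Y)`. Then each term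
`R(ρ(e⊗f₁),ρ(e⊗f₂))(e⊗f₃)` lies in `e ⊗ F`; equivalently
`R^H(ρ(e⊗f₁),ρ(e⊗f₂))e` is proportional to `e`. -/
theorem cyclic_in_eF_implies_each_term_in_eF
    {H F W : Type*} [AddCommGroup H] [Module ℂ H] [AddCommGroup F] [Module ℂ F]
    [AddCommGroup W] [Module ℂ W]
    [FiniteDimensional ℂ H] [FiniteDimensional ℂ F] [FiniteDimensional ℂ W]
    (hH : 1 ≤ finrank ℂ H) (hF : 2 < finrank ℂ F)
    (R : W →ₗ[ℂ] W →ₗ[ℂ] Module.End ℂ (H ⊗[ℂ] F))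
    (hRalt : ∀ w : W, R w w = 0)
    (RH : W →ₗ[ℂ] W →ₗ[ℂ] Module.End ℂ H)
    (RF : W →ₗ[ℂ] W →ₗ[ℂ] Module.End ℂ F)
    (hdec : ∀ x y : W, R x y =
      TensorProduct.map (RH x y) LinearMap.id + TensorProduct.map LinearMap.id (RF x y))
    (ρ : H ⊗[ℂ] F →ₗ[ℂ] W)
    (hcyc : ∀ (e : H) (f₁ f₂ f₃ : F),
        R (ρ (e ⊗ₜ f₁)) (ρ (e ⊗ₜ f₂)) (e ⊗ₜ f₃)
      + R (ρ (e ⊗ₜ f₂)) (ρ (e ⊗ₜ f₃)) (e ⊗ₜ f₁)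
      + R (ρ (e ⊗ₜ f₃)) (ρ (e ⊗ₜ f₁)) (e ⊗ₜ f₂)
          ∈ LinearMap.range (TensorProduct.mk ℂ H F e)) :
    (∀ (e : H) (f₁ f₂ f₃ : F),
        R (ρ (e ⊗ₜ f₁)) (ρ (e ⊗ₜ f₂)) (e ⊗ₜ f₃)
          ∈ LinearMap.range (TensorProduct.mk ℂ H F e)) ∧
    (∀ (e : H) (f₁ f₂ : F), ∃ c : ℂ,
        RH (ρ (e ⊗ₜ f₁)) (ρ (e ⊗ₜ f₂)) e = c • e) := by
  -- abbreviations
  have key : ∀ (e : H) (f₁ f₂ : F), ∃ c : ℂ,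
      RH (ρ (e ⊗ₜ f₁)) (ρ (e ⊗ₜ f₂)) e = c • e := by
    intro e f₁ f₂
    set p : Submodule ℂ H := ℂ ∙ e with hp
    set q : H →ₗ[ℂ] H ⧸ p := p.mkQ with hq
    have hqe : q e = 0 := by
      simp [hq, hp, Submodule.Quotient.mk_eq_zero, Submodule.mem_span_singleton_self]
    set a : F → F → H := fun g₁ g₂ => RH (ρ (e ⊗ₜ g₁)) (ρ (e ⊗ₜ g₂)) e with ha
    -- step 1: cyclic identity in quotient tensor
    have step1 : ∀ g₁ g₂ g₃ : F,
        q (a g₁ g₂) ⊗ₜ[ℂ] g₃ + q (a g₂ g₃) ⊗ₜ[ℂ] g₁ + q (a g₃ g₁) ⊗ₜ[ℂ] g₂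
          = (0 : (H ⧸ p) ⊗[ℂ] F) := by
      intro g₁ g₂ g₃
      obtain ⟨f, hf⟩ := hcyc e g₁ g₂ g₃
      have expand : ∀ x y : W, ∀ g : F,
          R x y (e ⊗ₜ g) = (RH x y e) ⊗ₜ g + e ⊗ₜ (RF x y g) := by
        intro x y g
        rw [hdec x y]
        simp [TensorProduct.map_tmul]
      have := congrArg (LinearMap.rTensor F q) hf
      simp only [TensorProduct.mk_apply, expand, map_add, LinearMap.rTensor_tmul,
        hqe, TensorProduct.zero_tmul, add_zero] at this
      rw [← this]
    -- step 2: find functional killing g₁, g₂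
    suffices hb : q (a f₁ f₂) = 0 by
      rw [hq, Submodule.mkQ_apply, Submodule.Quotient.mk_eq_zero, hp,
        Submodule.mem_span_singleton] at hb
      obtain ⟨c, hc⟩ := hb
      exact ⟨c, hc.symm⟩
    classical
    have hlt : Submodule.span ℂ ({f₁, f₂} : Set F) < ⊤ := by
      have h2 : ({f₁, f₂} : Set F) = (({f₁, f₂} : Finset F) : Set F) := by simp
      rw [h2]
      apply span_lt_top_of_card_lt_finrank
      refine lt_of_le_of_lt ?_ hF
      rw [Finset.toFinset_coe]
      exact le_trans (Finset.card_insert_le _ _) (by simp)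
    obtain ⟨f₃, hf₃⟩ : ∃ f₃, f₃ ∉ Submodule.span ℂ {f₁, f₂} := by
      by_contra hcon
      push_neg at hcon
      exact hlt.ne (top_unique fun x _ => hcon x)
    obtain ⟨φ, hφ3, hφmap⟩ :=
      (Submodule.span ℂ {f₁, f₂}).exists_dual_map_eq_bot_of_notMem hf₃ inferInstance
    have hφ1 : φ f₁ = 0 := by
      have : φ f₁ ∈ (Submodule.span ℂ {f₁, f₂}).map φ :=
        Submodule.mem_map_of_mem (Submodule.subset_span (by simp))
      simpa [hφmap] using this
    have hφ2 : φ f₂ = 0 := by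
      have : φ f₂ ∈ (Submodule.span ℂ {f₁, f₂}).map φ :=
        Submodule.mem_map_of_mem (Submodule.subset_span (by simp))
      simpa [hφmap] using this
    -- contract step1 with φ
    have := congrArg ((TensorProduct.rid ℂ (H ⧸ p)).toLinearMap.comp
        (LinearMap.lTensor (H ⧸ p) φ)) (step1 f₁ f₂ f₃)
    simp only [LinearMap.coe_comp, Function.comp_apply, map_add, LinearMap.lTensor_tmul,
      LinearEquiv.coe_coe, TensorProduct.rid_tmul, hφ1, hφ2, zero_smul, add_zero,
      map_zero] at this
    have : φ f₃ • q (a f₁ f₂) = 0 := this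
    have := congrArg (fun v => (φ f₃)⁻¹ • v) this
    simpa [smul_smul, inv_mul_cancel₀ hφ3] using this
  refine ⟨?_, key⟩
  intro e f₁ f₂ f₃
  obtain ⟨c, hc⟩ := key e f₁ f₂
  rw [hdec]
  refine ⟨c • f₃ + RF (ρ (e ⊗ₜ f₁)) (ρ (e ⊗ₜ f₂)) f₃, ?_⟩
  have h1 : (TensorProduct.mk ℂ H F e) (c • f₃ + RF (ρ (e ⊗ₜ f₁)) (ρ (e ⊗ₜ f₂)) f₃)
      = e ⊗ₜ[ℂ] (c • f₃) + e ⊗ₜ[ℂ] (RF (ρ (e ⊗ₜ f₁)) (ρ (e ⊗ₜ f₂)) f₃) := by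
    simp [TensorProduct.tmul_add]
  rw [h1]
  simp only [LinearMap.add_apply, TensorProduct.map_tmul, LinearMap.id_coe, id_eq, hc]
  rw [TensorProduct.smul_tmul]
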